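/- Let a, b, c, d : ℝ → ℝ be differentiable functions satisfying the Riccati system (R) on all of ℝ. Then 1 + a(t)·d(t) − b(t)·c(t) > 0 for every t ∈ ℝ. -/

import Mathlib

open Real intervalIntegral

/-- For differentiable functions `a, b, c, d : ℝ → ℝ` satisfying the Riccati system
`a' = 1 + a² + bc`, `d' = 1 + d² + bc`, `b' = b(a+d)`, `c' = c(a+d)` on all of `ℝ`,
one has `1 + a·d − b·c > 0` everywhere. -/
theorem riccati_one_add_det_pos
    (a b c d : ℝ → ℝ)
    (ha : Differentiable ℝ a) (hb : Differentiable ℝ b)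
    (hc : Differentiable ℝ c) (hd : Differentiable ℝ d)
    (hA : ∀ t, deriv a t = 1 + (a t) ^ 2 + b t * c t)
    (hD : ∀ t, deriv d t = 1 + (d t) ^ 2 + b t * c t)
    (hB : ∀ t, deriv b t = b t * (a t + d t))
    (hC : ∀ t, deriv c t = c t * (a t + d t)) :
    ∀ t : ℝ, 0 < 1 + a t * d t - b t * c t := by
  set F : ℝ → ℝ := fun t => 1 + a t * d t - b t * c t with hFdef
  have hA' : ∀ t, HasDerivAt a (1 + (a t) ^ 2 + b t * c t) t := fun t =>
    hA t ▸ (ha t).hasDerivAt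
  have hD' : ∀ t, HasDerivAt d (1 + (d t) ^ 2 + b t * c t) t := fun t =>
    hD t ▸ (hd t).hasDerivAt
  have hB' : ∀ t, HasDerivAt b (b t * (a t + d t)) t := fun t =>
    hB t ▸ (hb t).hasDerivAt
  have hC' : ∀ t, HasDerivAt c (c t * (a t + d t)) t := fun t =>
    hC t ▸ (hc t).hasDerivAt
  have hF' : ∀ t, HasDerivAt F ((a t + d t) * F t) t := by
    intro t
    have h1 := ((hasDerivAt_const t (1 : ℝ)).add ((hA' t).mul (hD' t))).sub
      ((hB' t).mul (hC' t))
    refine h1.congr_deriv ?_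
    simp only [hFdef]
    ring
  -- integrating factor
  have hsc : Continuous fun t => a t + d t := (ha.add hd).continuous
  set P : ℝ → ℝ := fun t => ∫ x in (0:ℝ)..t, (a x + d x) with hPdef
  have hP' : ∀ t, HasDerivAt P (a t + d t) t := fun t =>
    intervalIntegral.integral_hasDerivAt_right (hsc.intervalIntegrable 0 t)
      hsc.aestronglyMeasurable.stronglyMeasurableAtFilter hsc.continuousAt
  set G : ℝ → ℝ := fun t => F t * Real.exp (-P t) with hGdef
  have hG' : ∀ t, HasDerivAt G 0 t := by
    intro t
    have h1 := (hF' t).mul (((hP' t).neg).exp)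
    refine h1.congr_deriv ?_
    ring
  have hGconst : ∀ s t : ℝ, G s = G t := by
    intro s t
    exact is_const_of_deriv_eq_zero (fun x => (hG' x).differentiableAt)
      (fun x => (hG' x).deriv) s t
  -- main argument: suppose F t₁ ≤ 0
  intro t₀
  by_contra hcon
  push_neg at hcon
  have hFle : ∀ t, F t ≤ 0 := by
    intro t
    have h1 : F t * Real.exp (-P t) = F t₀ * Real.exp (-P t₀) := hGconst t t₀
    have h2 : F t₀ * Real.exp (-P t₀) ≤ 0 :=
      mul_nonpos_of_nonpos_of_nonneg hcon (Real.exp_pos _).le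
    nlinarith [Real.exp_pos (-P t), Real.exp_pos (-P t₀)]
  set s : ℝ → ℝ := fun t => a t + d t with hsdef
  have hs' : ∀ t, HasDerivAt s (2 + (a t)^2 + (d t)^2 + 2*(b t * c t)) t := by
    intro t
    have := (hA' t).add (hD' t)
    refine this.congr_deriv ?_
    ring
  set g : ℝ → ℝ := fun t => Real.arctan (s t / 2) with hgdef
  have hg' : ∀ t, HasDerivAt g ((1 / (1 + (s t / 2) ^ 2)) *
      ((2 + (a t)^2 + (d t)^2 + 2*(b t * c t)) / 2)) t := by
    intro t
    exact (Real.hasDerivAt_arctan (s t / 2)).comp t ((hs' t).div_const 2)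
  have hgge : ∀ t, 2 ≤ deriv g t := by
    intro t
    rw [(hg' t).deriv]
    have h1 : b t * c t - (1 + a t * d t) ≥ 0 := by have := hFle t; simp only [hFdef] at this; linarith
    have h2 : (0:ℝ) < 1 + (s t / 2) ^ 2 := by positivity
    have hs2 : s t = a t + d t := rfl
    rw [hs2] at h2 ⊢
    rw [one_div, inv_mul_eq_div, le_div_iff₀ h2]
    nlinarith [h1]
  have hgdiff : Differentiable ℝ g := fun t => (hg' t).differentiableAt
  set h : ℝ → ℝ := fun t => g t - 2 * t with hhdef
  have hmono : Monotone h := by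
    apply monotone_of_deriv_nonneg
    · exact hgdiff.sub (by fun_prop)
    · intro x
      have h2x : HasDerivAt (fun t : ℝ => 2 * t) 2 x := by
        simpa using (hasDerivAt_id x).const_mul 2
      have : HasDerivAt h (deriv g x - 2) x := ((hgdiff x).hasDerivAt).sub h2x
      rw [this.deriv]
      linarith [hgge x]
  have h1 : h 0 ≤ h π := hmono Real.pi_pos.le
  have h2 : g π < π / 2 := Real.arctan_lt_pi_div_two _
  have h3 : -(π / 2) < g 0 := Real.neg_pi_div_two_lt_arctan _
  simp only [hhdef] at h1
  linarith [Real.pi_pos]
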